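/- The partial products ∏_{n=0}^{N} ((4n+3)/(4n+1))^{u_n} converge as N → ∞ to 2. Equivalently, f(1/4, 3/4) = 3/2, where f(b,c) := lim_{N→∞} ∏_{n=1}^{N} ((n+b)/(n+c))^{u_n}. -/

import Mathlib

open Filter Finset Topology

/-- The Thue–Morse sequence with values `±1`: `u n = (-1)^(s₂ n)` where `s₂ n`
is the sum of the binary digits of `n`. -/
def u (n : ℕ) : ℤ := (-1) ^ (Nat.digits 2 n).sum



lemma u_zero : u 0 = 1 := by simp [u]
lemma u_even (n : ℕ) : u (2*n) = u n := by
  rcases Nat.eq_zero_or_pos n with h|h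
  · subst h; rfl
  · unfold u
    rw [Nat.digits_def' (by norm_num : 1 < 2) (by omega : 0 < 2*n)]
    simp [Nat.mul_div_cancel_left, Nat.mul_mod_right]
lemma u_odd (n : ℕ) : u (2*n+1) = -u n := by
  unfold u
  rw [Nat.digits_def' (by norm_num : 1 < 2) (by omega : 0 < 2*n+1)]
  have h1 : (2*n+1) % 2 = 1 := by omega
  have h2 : (2*n+1) / 2 = n := by omega
  rw [h1, h2]; simp [pow_add]
lemma u_one : u 1 = -1 := by rw [show 1 = 2*0+1 from rfl, u_odd, u_zero]
lemma u_pm (n : ℕ) : u n = 1 ∨ u n = -1 := by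
  unfold u
  rcases Nat.even_or_odd ((Nat.digits 2 n).sum) with h|h
  · left; exact h.neg_one_pow
  · right; exact h.neg_one_pow

noncomputable def a (n : ℕ) : ℝ := (2*n+1)/(2*n+2)
noncomputable def b (n : ℕ) : ℝ := (2*n)/(2*n+1)
noncomputable def A (N : ℕ) : ℝ := ∏ n ∈ range (N+1), a n ^ u n
noncomputable def B (N : ℕ) : ℝ := ∏ n ∈ Icc 1 N, b n ^ u n
noncomputable def P (N : ℕ) : ℝ := ∏ n ∈ range (N+1), ((4*(n:ℝ)+3)/(4*(n:ℝ)+1)) ^ u n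

lemma a_pos (n : ℕ) : 0 < a n := by unfold a; positivity
lemma b_pos (n : ℕ) (h : 1 ≤ n) : 0 < b n := by
  unfold b
  have : (1:ℝ) ≤ (n:ℝ) := by exact_mod_cast h
  positivity

lemma A_succ (M : ℕ) : A (M+1) = A M * a (M+1) ^ u (M+1) := Finset.prod_range_succ _ _
lemma P_succ (M : ℕ) : P (M+1) = P M * ((4*((M+1:ℕ):ℝ)+3)/(4*((M+1:ℕ):ℝ)+1)) ^ u (M+1) :=
  Finset.prod_range_succ _ _
lemma B_succ (M : ℕ) : B (M+1) = B M * b (M+1) ^ u (M+1) := by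
  unfold B; rw [← Finset.prod_Icc_succ_top (by omega)]

lemma key_step (e : ℤ) (x y z : ℝ) (hy : y ≠ 0) (h : x = y * z) : x ^ e * y ^ (-e) = z ^ e := by
  have h1 : y ^ e ≠ 0 := zpow_ne_zero e hy
  rw [h, mul_zpow, zpow_neg]
  field_simp

-- (★★) : P N * (A N * A (2N+1)) = 1
lemma starstar (N : ℕ) : P N * (A N * A (2*N+1)) = 1 := by
  induction N with
  | zero =>
    unfold P A
    norm_num [Finset.prod_range_succ, u_zero, u_one, a]
  | succ N ih =>
    have e1 : 2*(N+1)+1 = (2*N+1)+1+1 := by ring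
    rw [e1, A_succ ((2*N+1)+1), A_succ (2*N+1), A_succ N, P_succ N]
    have hu2 : u (2*N+1+1) = u (N+1) := by rw [show 2*N+1+1 = 2*(N+1) from by ring, u_even]
    have hu3 : u (2*N+1+1+1) = -u (N+1) := by rw [show 2*N+1+1+1 = 2*(N+1)+1 from by ring, u_odd]
    rw [hu2, hu3]
    have hkey : ((4*((N+1:ℕ):ℝ)+3)/(4*((N+1:ℕ):ℝ)+1) * (a (N+1) * a (2*N+1+1))) ^ (u (N+1))
        * a (2*N+1+1+1) ^ (-u (N+1)) = 1 := by
      rw [key_step (u (N+1)) _ _ 1 ?_ ?_, one_zpow]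
      · exact ne_of_gt (a_pos _)
      · unfold a; push_cast; rw [mul_one]; field_simp; ring
    calc P N * ((4*((N+1:ℕ):ℝ)+3)/(4*((N+1:ℕ):ℝ)+1)) ^ u (N+1) *
          (A N * a (N+1) ^ u (N+1) * (A (2*N+1) * a (2*N+1+1) ^ u (N+1) * a (2*N+1+1+1) ^ (-u (N+1))))
        = (P N * (A N * A (2*N+1))) *
          (((4*((N+1:ℕ):ℝ)+3)/(4*((N+1:ℕ):ℝ)+1)) ^ u (N+1) * a (N+1) ^ u (N+1) * a (2*N+1+1) ^ u (N+1)
            * a (2*N+1+1+1) ^ (-u (N+1))) := by ring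
      _ = 1 := by
          rw [ih, one_mul, ← mul_zpow, ← mul_zpow, mul_assoc]
          exact hkey

-- (★) : A(2N+1) * B(2N+1) * A N = (1/2) * B N
lemma star (N : ℕ) : A (2*N+1) * B (2*N+1) * A N = (1/2) * B N := by
  induction N with
  | zero =>
    unfold A B
    norm_num [Finset.prod_range_succ, u_zero, u_one, a, b]
  | succ N ih =>
    have e1 : 2*(N+1)+1 = (2*N+1)+1+1 := by ring
    rw [e1, A_succ ((2*N+1)+1), A_succ (2*N+1), A_succ N,
      B_succ ((2*N+1)+1), B_succ (2*N+1), B_succ N]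
    have hu2 : u (2*N+1+1) = u (N+1) := by rw [show 2*N+1+1 = 2*(N+1) from by ring, u_even]
    have hu3 : u (2*N+1+1+1) = -u (N+1) := by rw [show 2*N+1+1+1 = 2*(N+1)+1 from by ring, u_odd]
    rw [hu2, hu3]
    have hkey : (a (2*N+1+1) * b (2*N+1+1) * a (N+1)) ^ (u (N+1))
        * (a (2*N+1+1+1) * b (2*N+1+1+1)) ^ (-u (N+1)) = b (N+1) ^ u (N+1) := by
      apply key_step
      · have h1 := a_pos (2*N+1+1+1); have h2 := b_pos (2*N+1+1+1) (by omega)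
        positivity
      · unfold a b; push_cast; field_simp; ring
    calc A (2*N+1) * a (2*N+1+1) ^ u (N+1) * a (2*N+1+1+1) ^ (-u (N+1)) *
          (B (2*N+1) * b (2*N+1+1) ^ u (N+1) * b (2*N+1+1+1) ^ (-u (N+1))) *
          (A N * a (N+1) ^ u (N+1))
        = (A (2*N+1) * B (2*N+1) * A N) *
          ((a (2*N+1+1) ^ u (N+1) * b (2*N+1+1) ^ u (N+1) * a (N+1) ^ u (N+1))
            * (a (2*N+1+1+1) ^ (-u (N+1)) * b (2*N+1+1+1) ^ (-u (N+1)))) := by ring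
      _ = (1/2) * B N * b (N+1) ^ u (N+1) := by
          rw [ih, ← mul_zpow, ← mul_zpow, ← mul_zpow, hkey]
      _ = 1/2 * (B N * b (N+1) ^ u (N+1)) := by ring

noncomputable def r (m : ℕ) : ℝ := ((4*m+1)*(4*m+4))/((4*m+2)*(4*m+3))
noncomputable def s (m : ℕ) : ℝ := ((4*m)*(4*m+3))/((4*m+1)*(4*m+2))

lemma r_pos (m : ℕ) : 0 < r m := by unfold r; positivity
lemma s_pos (m : ℕ) (h : 1 ≤ m) : 0 < s m := by
  unfold s
  have : (1:ℝ) ≤ (m:ℝ) := by exact_mod_cast h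
  positivity

lemma A_odd (N : ℕ) : A (2*N+1) = ∏ m ∈ range (N+1), r m ^ u m := by
  induction N with
  | zero =>
    unfold A r
    norm_num [Finset.prod_range_succ, u_zero, u_one, a]
  | succ N ih =>
    have e1 : 2*(N+1)+1 = (2*N+1)+1+1 := by ring
    rw [e1, A_succ ((2*N+1)+1), A_succ (2*N+1), Finset.prod_range_succ, ← ih]
    have hu2 : u (2*N+1+1) = u (N+1) := by rw [show 2*N+1+1 = 2*(N+1) from by ring, u_even]
    have hu3 : u (2*N+1+1+1) = -u (N+1) := by rw [show 2*N+1+1+1 = 2*(N+1)+1 from by ring, u_odd]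
    rw [hu2, hu3, mul_assoc]
    congr 1
    apply key_step
    · exact ne_of_gt (a_pos _)
    · unfold a r; push_cast; field_simp; ring

lemma B_odd (N : ℕ) : B (2*N+1) = (3/2) * ∏ m ∈ Icc 1 N, s m ^ u m := by
  induction N with
  | zero =>
    unfold B
    norm_num [u_one, b]
  | succ N ih =>
    have e1 : 2*(N+1)+1 = (2*N+1)+1+1 := by ring
    rw [e1, B_succ ((2*N+1)+1), B_succ (2*N+1), Finset.prod_Icc_succ_top (by omega : 1 ≤ N+1), ih]
    have hu2 : u (2*N+1+1) = u (N+1) := by rw [show 2*N+1+1 = 2*(N+1) from by ring, u_even]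
    have hu3 : u (2*N+1+1+1) = -u (N+1) := by rw [show 2*N+1+1+1 = 2*(N+1)+1 from by ring, u_odd]
    rw [hu2, hu3]
    have hkey : b (2*N+1+1) ^ u (N+1) * b (2*N+1+1+1) ^ (-u (N+1)) = s (N+1) ^ u (N+1) := by
      apply key_step
      · exact ne_of_gt (b_pos _ (by omega))
      · unfold b s; push_cast; field_simp; ring
    calc 3/2 * (∏ m ∈ Icc 1 N, s m ^ u m) * b (2*N+1+1) ^ u (N+1) * b (2*N+1+1+1) ^ (-u (N+1))
        = 3/2 * ((∏ m ∈ Icc 1 N, s m ^ u m) * (b (2*N+1+1) ^ u (N+1) * b (2*N+1+1+1) ^ (-u (N+1)))) := by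
          ring
      _ = 3/2 * ((∏ m ∈ Icc 1 N, s m ^ u m) * s (N+1) ^ u (N+1)) := by rw [hkey]
      _ = 3/2 * ((∏ m ∈ Icc 1 N, s m ^ u m) * s (N+1) ^ u (N+1)) := by ring

noncomputable def tr (m : ℕ) : ℝ := (u m : ℝ) * Real.log (r m)
noncomputable def ts (m : ℕ) : ℝ := if m = 0 then 0 else (u m : ℝ) * Real.log (s m)

lemma abs_u (m : ℕ) : |(u m : ℝ)| = 1 := by
  rcases u_pm m with h|h <;> simp [h]

lemma abs_log_le {x c : ℝ} (h1 : 2/3 ≤ x) (h2 : x ≤ 1) (h3 : x⁻¹ - 1 ≤ c) :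
    |Real.log x| ≤ c := by
  have hx : (0:ℝ) < x := lt_of_lt_of_le (by norm_num) h1
  have hle : Real.log x ≤ 0 := Real.log_nonpos (le_of_lt hx) h2
  rw [abs_of_nonpos hle, ← Real.log_inv]
  calc Real.log x⁻¹ ≤ x⁻¹ - 1 := Real.log_le_sub_one_of_pos (by positivity)
    _ ≤ c := h3

lemma tr_bound (m : ℕ) : |tr m| ≤ 1/((m:ℝ)+1)^2 := by
  unfold tr
  rw [abs_mul, abs_u, one_mul]
  have hm : (0:ℝ) ≤ (m:ℝ) := Nat.cast_nonneg m
  apply abs_log_le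
  · unfold r
    rw [le_div_iff₀ (by positivity)]
    nlinarith
  · unfold r
    rw [div_le_one (by positivity)]
    nlinarith
  · unfold r
    rw [inv_div, div_sub_one (by positivity), div_le_div_iff₀ (by positivity) (by positivity)]
    nlinarith

lemma ts_bound (m : ℕ) : |ts m| ≤ 1/((m:ℝ)+1)^2 := by
  unfold ts
  rcases Nat.eq_zero_or_pos m with h|h
  · subst h; norm_num
  · have hm : (1:ℝ) ≤ (m:ℝ) := by exact_mod_cast h
    rw [if_neg (by omega)]
    rw [abs_mul, abs_u, one_mul]
    apply abs_log_le
    · unfold s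
      rw [le_div_iff₀ (by positivity)]
      nlinarith
    · unfold s
      rw [div_le_one (by positivity)]
      nlinarith
    · unfold s
      rw [inv_div, div_sub_one (by positivity), div_le_div_iff₀ (by positivity) (by positivity)]
      nlinarith

lemma summable_aux : Summable (fun m : ℕ => 1/((m:ℝ)+1)^2) := by
  have h := Real.summable_one_div_nat_pow.mpr (show 1 < 2 by norm_num)
  have h2 := (summable_nat_add_iff 1).mpr h
  refine h2.congr fun n => by push_cast; ring

lemma tr_summable : Summable tr :=
  Summable.of_abs (Summable.of_nonneg_of_le (fun m => abs_nonneg _) tr_bound summable_aux)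
lemma ts_summable : Summable ts :=
  Summable.of_abs (Summable.of_nonneg_of_le (fun m => abs_nonneg _) ts_bound summable_aux)

lemma zpow_eq_exp {x : ℝ} (hx : 0 < x) (e : ℤ) : x ^ e = Real.exp (e * Real.log x) := by
  rw [← Real.rpow_intCast x e, Real.rpow_def_of_pos hx, mul_comm]

lemma A_odd_exp (N : ℕ) : A (2*N+1) = Real.exp (∑ m ∈ range (N+1), tr m) := by
  rw [A_odd, Real.exp_sum]
  exact Finset.prod_congr rfl fun m _ => zpow_eq_exp (r_pos m) (u m)

lemma B_odd_exp (N : ℕ) : B (2*N+1) = 3/2 * Real.exp (∑ m ∈ range (N+1), ts m) := by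
  rw [B_odd]
  congr 1
  have h1 : ∑ m ∈ range (N+1), ts m = ∑ m ∈ Icc 1 N, ts m := by
    rw [Finset.sum_range_succ']
    have h0 : ts 0 = 0 := by simp [ts]
    rw [h0, add_zero, ← Finset.Ico_add_one_right_eq_Icc, Finset.sum_Ico_eq_sum_range]
    simp [add_comm]
  rw [h1, Real.exp_sum]
  refine Finset.prod_congr rfl fun m hm => ?_
  have hm1 : 1 ≤ m := (Finset.mem_Icc.mp hm).1
  rw [show ts m = (u m : ℝ) * Real.log (s m) from by rw [ts, if_neg (by omega)]]
  exact zpow_eq_exp (s_pos m hm1) (u m)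

lemma tendsto_of_even_odd {f : ℕ → ℝ} {l : ℝ}
    (he : Tendsto (fun n => f (2*n)) atTop (𝓝 l))
    (ho : Tendsto (fun n => f (2*n+1)) atTop (𝓝 l)) :
    Tendsto f atTop (𝓝 l) := by
  rw [Metric.tendsto_atTop] at he ho ⊢
  intro ε hε
  obtain ⟨N₁, h₁⟩ := he ε hε
  obtain ⟨N₂, h₂⟩ := ho ε hε
  refine ⟨2*N₁ + 2*N₂ + 1, fun n hn => ?_⟩
  rcases Nat.even_or_odd n with ⟨k, hk⟩ | ⟨k, hk⟩
  · have : n = 2*k := by omega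
    rw [this]
    exact h₁ k (by omega)
  · have : n = 2*k+1 := by omega
    rw [this]
    exact h₂ k (by omega)

lemma tendsto_zpow_pm_one {x : ℕ → ℝ} (hx : ∀ n, 0 < x n)
    (hlim : Tendsto x atTop (𝓝 1)) (e : ℕ → ℤ) (he : ∀ n, e n = 1 ∨ e n = -1) :
    Tendsto (fun n => x n ^ e n) atTop (𝓝 1) := by
  have hinv : Tendsto (fun n => (x n)⁻¹) atTop (𝓝 1) := by
    simpa using hlim.inv₀ one_ne_zero
  have hmin : Tendsto (fun n => min (x n) (x n)⁻¹) atTop (𝓝 1) := by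
    simpa using hlim.min hinv
  have hmax : Tendsto (fun n => max (x n) (x n)⁻¹) atTop (𝓝 1) := by
    simpa using hlim.max hinv
  apply tendsto_of_tendsto_of_tendsto_of_le_of_le hmin hmax
  · intro n
    rcases he n with h|h <;> simp [h, min_le_left, min_le_right]
  · intro n
    rcases he n with h|h <;> simp [h, le_max_left, le_max_right]

lemma tendsto_aux_frac (c : ℝ) (hc : 0 < c + 1) :
    Tendsto (fun N : ℕ => (4*(N:ℝ)+c)/(4*(N:ℝ)+c+1)) atTop (𝓝 1) := by
  have hat : Tendsto (fun N : ℕ => (4*(N:ℝ)+c+1)) atTop atTop := by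
    apply tendsto_atTop_mono _ tendsto_natCast_atTop_atTop
    intro N
    have h1 : (0:ℝ) ≤ (N:ℝ) := Nat.cast_nonneg N
    linarith
  have h0 : Tendsto (fun N : ℕ => (4*(N:ℝ)+c+1)⁻¹) atTop (𝓝 0) :=
    hat.inv_tendsto_atTop
  have heq : ∀ N : ℕ, 1 - (4*(N:ℝ)+c+1)⁻¹ = (4*(N:ℝ)+c)/(4*(N:ℝ)+c+1) := by
    intro N
    have hpos : (0:ℝ) < 4*(N:ℝ)+c+1 := by
      have : (0:ℝ) ≤ (N:ℝ) := Nat.cast_nonneg N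
      linarith
    rw [eq_div_iff hpos.ne', sub_mul, inv_mul_cancel₀ hpos.ne', one_mul]
    ring
  have h2 : Tendsto (fun N : ℕ => 1 - (4*(N:ℝ)+c+1)⁻¹) atTop (𝓝 (1 - 0)) :=
    Tendsto.sub tendsto_const_nhds h0
  rw [sub_zero] at h2
  exact Tendsto.congr heq h2

lemma a_odd_tendsto : Tendsto (fun N : ℕ => a (2*N+1)) atTop (𝓝 1) := by
  have h := tendsto_aux_frac 3 (by norm_num)
  refine h.congr fun N => ?_
  unfold a; push_cast; ring_nf

lemma b_odd_tendsto : Tendsto (fun N : ℕ => b (2*N+1)) atTop (𝓝 1) := by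
  have h := tendsto_aux_frac 2 (by norm_num)
  refine h.congr fun N => ?_
  unfold b; push_cast; ring_nf

lemma A_pos (N : ℕ) : 0 < A N :=
  Finset.prod_pos fun n _ => zpow_pos (a_pos n) _

lemma A_even_eq (N : ℕ) : A (2*N) = A (2*N+1) * a (2*N+1) ^ u N := by
  have h := A_succ (2*N)
  rw [u_odd] at h
  rw [h, mul_assoc, ← zpow_add₀ (ne_of_gt (a_pos (2*N+1))), neg_add_cancel, zpow_zero, mul_one]

lemma B_even_eq (N : ℕ) : B (2*N) = B (2*N+1) * b (2*N+1) ^ u N := by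
  have h := B_succ (2*N)
  rw [u_odd] at h
  rw [h, mul_assoc, ← zpow_add₀ (ne_of_gt (b_pos (2*N+1) (by omega))), neg_add_cancel,
    zpow_zero, mul_one]

noncomputable def La : ℝ := Real.exp (∑' m, tr m)
noncomputable def Lb : ℝ := 3/2 * Real.exp (∑' m, ts m)

lemma hAodd : Tendsto (fun N => A (2*N+1)) atTop (𝓝 La) := by
  have hS : Tendsto (fun N : ℕ => ∑ m ∈ range (N+1), tr m) atTop (𝓝 (∑' m, tr m)) :=
    (tr_summable.hasSum.tendsto_sum_nat).comp (tendsto_add_atTop_nat 1)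
  have := (Real.continuous_exp.tendsto _).comp hS
  exact this.congr fun N => (A_odd_exp N).symm

lemma hBodd : Tendsto (fun N => B (2*N+1)) atTop (𝓝 Lb) := by
  have hS : Tendsto (fun N : ℕ => ∑ m ∈ range (N+1), ts m) atTop (𝓝 (∑' m, ts m)) :=
    (ts_summable.hasSum.tendsto_sum_nat).comp (tendsto_add_atTop_nat 1)
  have h2 := (Real.continuous_exp.tendsto _).comp hS
  have h3 := h2.const_mul (3/2 : ℝ)
  exact h3.congr fun N => (B_odd_exp N).symm

lemma hAfull : Tendsto A atTop (𝓝 La) := by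
  apply tendsto_of_even_odd _ hAodd
  have h1 : Tendsto (fun N => a (2*N+1) ^ u N) atTop (𝓝 1) :=
    tendsto_zpow_pm_one (fun N => a_pos (2*N+1)) a_odd_tendsto _ (fun N => u_pm N)
  have := hAodd.mul h1
  rw [mul_one] at this
  exact this.congr fun N => (A_even_eq N).symm

lemma hBfull : Tendsto B atTop (𝓝 Lb) := by
  apply tendsto_of_even_odd _ hBodd
  have h1 : Tendsto (fun N => b (2*N+1) ^ u N) atTop (𝓝 1) :=
    tendsto_zpow_pm_one (fun N => b_pos (2*N+1) (by omega)) b_odd_tendsto _ (fun N => u_pm N)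
  have := hBodd.mul h1
  rw [mul_one] at this
  exact this.congr fun N => (B_even_eq N).symm

lemma La_sq : La * La = 1/2 := by
  have hLb : Lb ≠ 0 := by
    unfold Lb
    positivity
  have h1 : Tendsto (fun N => A (2*N+1) * B (2*N+1) * A N) atTop (𝓝 (La * Lb * La)) :=
    (hAodd.mul hBodd).mul hAfull
  have h2 : Tendsto (fun N => A (2*N+1) * B (2*N+1) * A N) atTop (𝓝 (1/2 * Lb)) := by
    have := hBfull.const_mul (1/2 : ℝ)
    exact this.congr fun N => (_root_.star N).symm
  have h3 : La * Lb * La = 1/2 * Lb := tendsto_nhds_unique h1 h2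
  have : La * La * Lb = 1/2 * Lb := by linear_combination h3
  exact mul_right_cancel₀ hLb this

lemma hPmain : Tendsto P atTop (𝓝 2) := by
  have hform : ∀ N, P N = (A N * A (2*N+1))⁻¹ := fun N =>
    eq_inv_of_mul_eq_one_left (by
      have h := starstar N
      linear_combination h)
  have h1 : Tendsto (fun N => (A N * A (2*N+1))⁻¹) atTop (𝓝 ((La * La)⁻¹)) := by
    apply Tendsto.inv₀ (hAfull.mul hAodd)
    rw [La_sq]; norm_num
  rw [show ((La * La)⁻¹ : ℝ) = 2 from by rw [La_sq]; norm_num] at h1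
  exact h1.congr fun N => (hform N).symm

lemma P_pos (N : ℕ) : 0 < P N := by
  apply Finset.prod_pos
  intro n _
  apply zpow_pos
  positivity

lemma key2 (N : ℕ) : (∏ n ∈ Icc 1 N, (((n:ℝ)+1/4)/((n:ℝ)+3/4)) ^ u n) = 3 / P N := by
  have hIcc : ∀ g : ℕ → ℝ, ∏ n ∈ Icc 1 N, g n = ∏ i ∈ range N, g (i+1) := by
    intro g
    rw [← Finset.Ico_add_one_right_eq_Icc, Finset.prod_Ico_eq_prod_range]
    simp only [Nat.add_sub_cancel]
    exact Finset.prod_congr rfl fun i _ => by rw [add_comm]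
  have hP3 : P N = 3 * ∏ n ∈ Icc 1 N, ((4*(n:ℝ)+3)/(4*(n:ℝ)+1)) ^ u n := by
    unfold P
    rw [Finset.prod_range_succ']
    have h0 : ((4*((0:ℕ):ℝ)+3)/(4*((0:ℕ):ℝ)+1)) ^ u 0 = 3 := by norm_num [u_zero]
    rw [h0, hIcc]
    ring
  have hterm : ∀ n : ℕ, (((n:ℝ)+1/4)/((n:ℝ)+3/4)) ^ u n
      = (((4*(n:ℝ)+3)/(4*(n:ℝ)+1)) ^ u n)⁻¹ := by
    intro n
    rw [← inv_zpow]
    congr 1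
    rw [inv_div, div_eq_div_iff (by positivity) (by positivity)]
    ring
  rw [Finset.prod_congr rfl fun n _ => hterm n, Finset.prod_inv_distrib]
  have hQ : 0 < ∏ n ∈ Icc 1 N, ((4*(n:ℝ)+3)/(4*(n:ℝ)+1)) ^ u n := by
    apply Finset.prod_pos
    intro n _
    apply zpow_pos
    positivity
  rw [hP3]
  rw [eq_div_iff (by positivity)]
  field_simp

/-- The partial products `∏_{n=0}^{N} ((4n+3)/(4n+1))^{u_n}` converge to `2`;
equivalently, `f(1/4, 3/4) = 3/2`, i.e. the partial products
`∏_{n=1}^{N} ((n+1/4)/(n+3/4))^{u_n}` converge to `3/2`. -/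
theorem stmt_17 :
    Tendsto (fun N : ℕ => ∏ n ∈ Finset.range (N + 1),
      ((4 * (n : ℝ) + 3) / (4 * (n : ℝ) + 1)) ^ (u n)) atTop (𝓝 2) ∧
    Tendsto (fun N : ℕ => ∏ n ∈ Finset.Icc 1 N,
      (((n : ℝ) + 1 / 4) / ((n : ℝ) + 3 / 4)) ^ (u n)) atTop (𝓝 (3 / 2)) := by
  constructor
  · exact hPmain
  · have h1 : Tendsto (fun N => 3 / P N) atTop (𝓝 (3 / 2)) :=
      Tendsto.div tendsto_const_nhds hPmain (by norm_num)
    exact h1.congr fun N => (key2 N).symm
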